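/- Let t be a real number with 0 < t < 1. Then ∫₁^{1/t} dx / √( x(x−1)(1−tx) ) = π · ₂F₁(1/2, 1/2; 1; 1−t). (This is the period of the holomorphic differential dx/y on the Legendre elliptic curve y² = x(1−x)(1−tx) over the cycle around the interval from x = 1 to x = 1/t.) -/

import Mathlib

set_option autoImplicit false

open scoped Real

/-- Pochhammer symbol `(a)_n = a(a+1)⋯(a+n−1)` for a real number. -/
noncomputable def pochR (a : ℝ) (n : ℕ) : ℝ := ∏ k ∈ Finset.range n, (a + k)

/-- Gauss hypergeometric series `₂F₁(a,b;c;x)` (real). -/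
noncomputable def hyp2F1 (a b c x : ℝ) : ℝ :=
  ∑' n : ℕ, (pochR a n * pochR b n) / (pochR c n * (n.factorial : ℝ)) * x ^ n

noncomputable def cc (n : ℕ) : ℝ := pochR (1/2) n / n.factorial

lemma pochR_zero (a : ℝ) : pochR a 0 = 1 := by simp [pochR]

lemma pochR_succ (a : ℝ) (n : ℕ) : pochR a (n+1) = pochR a n * (a + n) := by
  simp [pochR, Finset.prod_range_succ]

lemma pochR_one_eq (n : ℕ) : pochR 1 n = n.factorial := by
  induction n with
  | zero => simp [pochR]
  | succ k ih => rw [pochR_succ, ih, Nat.factorial_succ]; push_cast; ring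

lemma cc_zero : cc 0 = 1 := by simp [cc, pochR_zero]

lemma cc_succ (n : ℕ) : cc (n+1) * (n+1) = cc n * (n + 1/2) := by
  have h : (n.factorial : ℝ) ≠ 0 := Nat.cast_ne_zero.mpr n.factorial_ne_zero
  have h2 : ((n+1 : ℕ).factorial : ℝ) = (n.factorial : ℝ) * (n+1) := by
    rw [Nat.factorial_succ]; push_cast; ring
  simp only [cc, pochR_succ, h2]
  field_simp
  ring

lemma cc_pos (n : ℕ) : 0 < cc n := by
  apply div_pos
  · apply Finset.prod_pos; intro k _; positivity
  · exact_mod_cast n.factorial_pos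

lemma cc_le_one (n : ℕ) : cc n ≤ 1 := by
  induction n with
  | zero => simp [cc_zero]
  | succ k ih =>
    have hk := cc_succ k
    have h1 : (0:ℝ) < (k:ℝ) + 1 := by positivity
    have : cc (k+1) = cc k * (k + 1/2) / (k+1) := by
      field_simp at hk ⊢; linarith [hk]
    rw [this]
    rw [div_le_one h1]
    calc cc k * (k + 1/2) ≤ 1 * (k + 1 : ℝ) := by
          apply mul_le_mul ih (by linarith) (by positivity) (by norm_num)
      _ = (k:ℝ)+1 := by ring

lemma cc_prod (n : ℕ) : cc n = ∏ i ∈ Finset.range n, (2 * (i:ℝ) + 1) / (2 * i + 2) := by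
  induction n with
  | zero => simp [cc_zero]
  | succ k ih =>
    rw [Finset.prod_range_succ, ← ih]
    have hk := cc_succ k
    have h1 : ((k:ℝ)+1) ≠ 0 := by positivity
    have h2 : (2*(k:ℝ)+2) ≠ 0 := by positivity
    field_simp at hk ⊢
    nlinarith [hk]

noncomputable def gg (x : ℝ) : ℝ := ∑' n : ℕ, cc n * x ^ n

lemma abs_cc_le_one (n : ℕ) : |cc n| ≤ 1 := by
  rw [abs_of_pos (cc_pos n)]; exact cc_le_one n

lemma summable_gg {x : ℝ} (hx : |x| < 1) : Summable (fun n : ℕ => cc n * x ^ n) := by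
  apply Summable.of_norm_bounded (g := fun n => |x| ^ n)
    (summable_geometric_of_lt_one (abs_nonneg x) hx)
  intro n
  rw [norm_mul, norm_pow, Real.norm_eq_abs, Real.norm_eq_abs]
  calc |cc n| * |x| ^ n ≤ 1 * |x| ^ n :=
        mul_le_mul_of_nonneg_right (abs_cc_le_one n) (by positivity)
    _ = |x| ^ n := one_mul _

lemma summable_ngeom {r : ℝ} (hr : |r| < 1) : Summable (fun n : ℕ => ((n:ℝ)+1) * |r| ^ n) := by
  have h1 : Summable (fun n : ℕ => (n:ℝ) * |r| ^ n) := by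
    have := summable_pow_mul_geometric_of_norm_lt_one (R := ℝ) 1
      (r := |r|) (by rwa [Real.norm_eq_abs, abs_abs])
    simpa using this
  have h2 : Summable (fun n : ℕ => |r| ^ n) :=
    summable_geometric_of_lt_one (abs_nonneg r) hr
  simpa [add_mul] using h1.add h2

lemma summable_D {x : ℝ} (hx : |x| < 1) :
    Summable (fun n : ℕ => ((n:ℝ)+1) * cc (n+1) * x ^ n) := by
  apply Summable.of_norm_bounded (summable_ngeom hx)
  intro n
  rw [Real.norm_eq_abs, abs_mul, abs_mul, abs_pow]
  calc |(n:ℝ)+1| * |cc (n+1)| * |x| ^ n ≤ |(n:ℝ)+1| * 1 * |x| ^ n := by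
        apply mul_le_mul_of_nonneg_right _ (by positivity)
        exact mul_le_mul_of_nonneg_left (abs_cc_le_one _) (abs_nonneg _)
    _ = ((n:ℝ)+1) * |x| ^ n := by
        rw [mul_one, abs_of_nonneg (by positivity : (0:ℝ) ≤ (n:ℝ)+1)]

lemma summable_B {x : ℝ} (hx : |x| < 1) :
    Summable (fun n : ℕ => (n:ℝ) * cc n * x ^ n) := by
  apply Summable.of_norm_bounded (summable_ngeom hx)
  intro n
  rw [Real.norm_eq_abs, abs_mul, abs_mul, abs_pow]
  calc |(n:ℝ)| * |cc n| * |x| ^ n ≤ ((n:ℝ)+1) * 1 * |x| ^ n := by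
        apply mul_le_mul_of_nonneg_right _ (by positivity)
        apply mul_le_mul _ (abs_cc_le_one _) (abs_nonneg _) (by positivity)
        rw [abs_of_nonneg (n.cast_nonneg)]; linarith
    _ = ((n:ℝ)+1) * |x| ^ n := by rw [mul_one]

lemma summable_der {x : ℝ} (hx : |x| < 1) :
    Summable (fun n : ℕ => cc n * ((n:ℝ) * x ^ (n-1))) := by
  rw [← summable_nat_add_iff 1]
  apply Summable.of_norm_bounded (summable_ngeom hx)
  intro n
  simp only [Nat.add_sub_cancel]
  rw [Real.norm_eq_abs, abs_mul, abs_mul, abs_pow]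
  push_cast
  calc |cc (n+1)| * (|(n:ℝ)+1| * |x| ^ n) ≤ 1 * (((n:ℝ)+1) * |x| ^ n) := by
        apply mul_le_mul (abs_cc_le_one _) _ (by positivity) (by norm_num)
        rw [abs_of_nonneg (by positivity : (0:ℝ) ≤ (n:ℝ)+1)]
    _ = ((n:ℝ)+1) * |x| ^ n := one_mul _

set_option maxHeartbeats 1000000 in
lemma hasDerivAt_gg {x : ℝ} (hx : |x| < 1) :
    HasDerivAt gg (∑' n : ℕ, cc n * ((n:ℝ) * x ^ (n-1))) x := by
  set r : ℝ := (1 + |x|) / 2 with hr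
  have hr0 : 0 < r := by positivity
  have hrx : |x| < r := by rw [hr]; linarith
  have hr1 : r < 1 := by rw [hr]; linarith
  have habs : |r| = r := abs_of_pos hr0
  have hu : Summable (fun n : ℕ => r⁻¹ * (((n:ℝ)+1) * r ^ n)) := by
    have h := (summable_ngeom (r := r) (by rwa [habs])).mul_left r⁻¹
    rwa [habs] at h
  have ht : IsOpen (Set.Ioo (-r) r) := isOpen_Ioo
  have h't : IsPreconnected (Set.Ioo (-r) r) := (convex_Ioo _ _).isPreconnected
  have hg : ∀ (n : ℕ) (y : ℝ), y ∈ Set.Ioo (-r) r →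
      HasDerivAt (fun z => cc n * z ^ n) (cc n * ((n:ℝ) * y ^ (n-1))) y :=
    fun n y _ => (hasDerivAt_pow n y).const_mul (cc n)
  have hg' : ∀ (n : ℕ) (y : ℝ), y ∈ Set.Ioo (-r) r →
      ‖cc n * ((n:ℝ) * y ^ (n-1))‖ ≤ r⁻¹ * (((n:ℝ)+1) * r ^ n) := by
    intro n y hy
    have hyr : |y| ≤ r := le_of_lt (abs_lt.mpr ⟨hy.1, hy.2⟩)
    rw [Real.norm_eq_abs, abs_mul, abs_mul, abs_pow]
    rcases Nat.eq_zero_or_pos n with h0 | hpos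
    · subst h0; simp; positivity
    · have hyn : |y| ^ (n-1) ≤ r ^ (n-1) := pow_le_pow_left₀ (abs_nonneg y) hyr _
      have hrn : r ^ (n-1) = r⁻¹ * r ^ n := by
        rw [eq_comm, inv_mul_eq_iff_eq_mul₀ (ne_of_gt hr0), ← pow_succ']
        congr 1
        omega
      calc |cc n| * (|(n:ℝ)| * |y| ^ (n-1)) ≤ 1 * ((n:ℝ) * (r⁻¹ * r ^ n)) := by
            apply mul_le_mul (abs_cc_le_one n) _ (by positivity) (by norm_num)
            rw [abs_of_nonneg (n.cast_nonneg), ← hrn]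
            exact mul_le_mul_of_nonneg_left hyn (n.cast_nonneg)
        _ ≤ r⁻¹ * (((n:ℝ)+1) * r ^ n) := by
            rw [one_mul]
            have h2 : (n:ℝ) * (r⁻¹ * r ^ n) = r⁻¹ * ((n:ℝ) * r ^ n) := by ring
            rw [h2]
            apply mul_le_mul_of_nonneg_left _ (by positivity)
            apply mul_le_mul_of_nonneg_right (by linarith) (by positivity)
  have hx' : x ∈ Set.Ioo (-r) r := by
    have := abs_lt.mp hrx; exact ⟨this.1, this.2⟩
  have hg0 : Summable fun n : ℕ => cc n * x ^ n := summable_gg hx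
  exact hasDerivAt_tsum_of_isPreconnected hu ht h't hg hg' hx' hg0 hx'

lemma der_eq_D {x : ℝ} (hx : |x| < 1) :
    (∑' n : ℕ, cc n * ((n:ℝ) * x ^ (n-1)))
      = ∑' n : ℕ, ((n:ℝ)+1) * cc (n+1) * x ^ n := by
  rw [(summable_der hx).tsum_eq_zero_add]
  simp only [Nat.cast_zero, zero_mul, mul_zero, zero_add, Nat.add_sub_cancel]
  apply tsum_congr
  intro n
  push_cast
  ring

lemma gg_ode {x : ℝ} (hx : |x| < 1) :
    (1 - x) * (∑' n : ℕ, ((n:ℝ)+1) * cc (n+1) * x ^ n) = (1/2) * gg x := by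
  have hD := summable_D hx
  have hB := summable_B hx
  have hxD : x * (∑' n : ℕ, ((n:ℝ)+1) * cc (n+1) * x ^ n)
      = ∑' n : ℕ, (n:ℝ) * cc n * x ^ n := by
    rw [← tsum_mul_left, hB.tsum_eq_zero_add]
    simp only [Nat.cast_zero, zero_mul, zero_add]
    apply tsum_congr
    intro n
    push_cast
    ring
  have key : (1 - x) * (∑' n : ℕ, ((n:ℝ)+1) * cc (n+1) * x ^ n)
      = ∑' n : ℕ, (((n:ℝ)+1) * cc (n+1) * x ^ n - (n:ℝ) * cc n * x ^ n) := by
    rw [hD.tsum_sub hB, ← hxD]; ring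
  rw [key]
  have : ∀ n : ℕ, ((n:ℝ)+1) * cc (n+1) * x ^ n - (n:ℝ) * cc n * x ^ n
      = (1/2) * (cc n * x ^ n) := by
    intro n
    have h := cc_succ n
    linear_combination x ^ n * h
  rw [tsum_congr this, tsum_mul_left]
  rfl

lemma gg_zero : gg 0 = 1 := by
  rw [gg, tsum_eq_single 0 (by intro n hn; simp [zero_pow hn])]
  simp [cc_zero]

lemma one_le_gg {z : ℝ} (h0 : 0 ≤ z) (h1 : z < 1) : 1 ≤ gg z := by
  have hz : |z| < 1 := by rwa [abs_of_nonneg h0]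
  have := Summable.le_tsum (summable_gg hz) 0 (fun n _ => mul_nonneg (cc_pos n).le (pow_nonneg h0 n))
  simpa [cc_zero, gg] using this

lemma gg_eq {z : ℝ} (h0 : 0 ≤ z) (h1 : z < 1) : gg z = 1 / Real.sqrt (1 - z) := by
  set φ : ℝ → ℝ := fun x => (1 - x) * (gg x) ^ 2 with hφ
  have hder : ∀ x ∈ Set.Icc (0:ℝ) z, HasDerivAt φ 0 x := by
    intro x hx
    have hax : |x| < 1 := by
      rw [abs_of_nonneg hx.1]; exact lt_of_le_of_lt hx.2 h1
    have hg := hasDerivAt_gg hax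
    rw [der_eq_D hax] at hg
    set Dx := ∑' n : ℕ, ((n:ℝ)+1) * cc (n+1) * x ^ n
    have h1' : HasDerivAt (fun y : ℝ => 1 - y) (-1) x := by
      simpa using (hasDerivAt_id x).const_sub 1
    have h2' : HasDerivAt (fun y => (gg y) ^ 2) (2 * gg x ^ 1 * Dx) x := hg.pow 2
    have h3' := h1'.mul h2'
    have hode := gg_ode hax
    have : (-1) * gg x ^ 2 + (1 - x) * (2 * gg x ^ 1 * Dx) = 0 := by
      have : (1 - x) * (2 * gg x ^ 1 * Dx) = 2 * gg x * ((1-x) * Dx) := by ring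
      rw [this, hode]; ring
    rw [this] at h3'
    exact h3'
  have hconst := constant_of_has_deriv_right_zero
    (f := φ) (a := 0) (b := z)
    (fun x hx => (hder x hx).continuousAt.continuousWithinAt)
    (fun x hx => (hder x (Set.Ico_subset_Icc_self hx)).hasDerivWithinAt)
  have hz' := hconst z (Set.right_mem_Icc.mpr h0)
  have hφ0 : φ 0 = 1 := by simp [hφ, gg_zero]
  rw [hφ0] at hz'
  -- hz' : (1 - z) * gg z ^ 2 = 1
  have hgpos : 0 < gg z := lt_of_lt_of_le one_pos (one_le_gg h0 h1)
  have h1z : 0 < 1 - z := by linarith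
  have hsq : (gg z) ^ 2 = 1 / (1 - z) := by
    field_simp
    rw [mul_comm]
    exact hz'
  have : gg z = Real.sqrt (1 / (1 - z)) := by
    rw [← hsq, Real.sqrt_sq hgpos.le]
  rw [this, one_div, Real.sqrt_inv, one_div]

lemma hasSum_gg {z : ℝ} (h0 : 0 ≤ z) (h1 : z < 1) :
    HasSum (fun n : ℕ => cc n * z ^ n) (1 / Real.sqrt (1 - z)) := by
  have hz : |z| < 1 := by rwa [abs_of_nonneg h0]
  have := (summable_gg hz).hasSum
  rwa [show ∑' n : ℕ, cc n * z ^ n = gg z from rfl, gg_eq h0 h1] at this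

lemma integral_sin_pow_half (n : ℕ) :
    ∫ θ in (0:ℝ)..(π/2), Real.sin θ ^ (2*n) = (π/2) * cc n := by
  have hcont : Continuous fun x : ℝ => Real.sin x ^ (2*n) := Real.continuous_sin.pow _
  have hrefl : ∫ x in (π/2:ℝ)..π, Real.sin x ^ (2*n)
      = ∫ x in (0:ℝ)..(π/2), Real.sin x ^ (2*n) := by
    have key := intervalIntegral.integral_comp_sub_left
      (a := 0) (b := π/2) (fun x => Real.sin x ^ (2*n)) π
    have h1 : π - π/2 = π/2 := by ring
    have h2 : π - 0 = π := by ring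
    rw [h1, h2] at key
    rw [← key]
    apply intervalIntegral.integral_congr
    intro x _
    simp [Real.sin_pi_sub]
  have hi1 : IntervalIntegrable (fun x : ℝ => Real.sin x ^ (2*n))
      MeasureTheory.volume 0 (π/2) := hcont.intervalIntegrable _ _
  have hi2 : IntervalIntegrable (fun x : ℝ => Real.sin x ^ (2*n))
      MeasureTheory.volume (π/2) π := hcont.intervalIntegrable _ _
  have hadd := intervalIntegral.integral_add_adjacent_intervals hi1 hi2
  have hfull : ∫ x in (0:ℝ)..π, Real.sin x ^ (2*n) = π * cc n := by
    rw [integral_sin_pow_even, cc_prod]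
  rw [← hadd, hrefl] at hfull
  linarith

theorem stmt10 (t : ℝ) (ht0 : 0 < t) (ht1 : t < 1) :
    ∫ x in (1:ℝ)..(1/t), 1 / Real.sqrt (x * (x - 1) * (1 - t * x))
      = π * hyp2F1 (1/2) (1/2) 1 (1 - t) := by
  set m : ℝ := 1 - t with hm_def
  have hm0 : 0 < m := by simp [hm_def]; linarith
  have hm1 : m < 1 := by simp [hm_def]; linarith
  have hπ := Real.pi_pos
  have h1t : (1:ℝ) < 1/t := by
    rw [lt_div_iff₀ ht0]; linarith
  -- positivity of the denominator 1 - m sin² θ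
  have hD_pos : ∀ θ : ℝ, 0 < 1 - m * Real.sin θ ^ 2 := by
    intro θ
    nlinarith [Real.sin_sq_le_one θ, sq_nonneg (Real.sin θ)]
  -- the substitution function
  set f : ℝ → ℝ := fun θ => (1 - m * Real.sin θ ^ 2)⁻¹ with hf_def
  have hf_deriv : ∀ θ : ℝ, HasDerivAt f
      (2 * m * Real.sin θ * Real.cos θ / (1 - m * Real.sin θ ^ 2) ^ 2) θ := by
    intro θ
    have h1 : HasDerivAt (fun y : ℝ => Real.sin y ^ 2)
        (2 * Real.sin θ * Real.cos θ) θ := by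
      have := (Real.hasDerivAt_sin θ).fun_pow 2
      simpa [mul_comm, mul_assoc, mul_left_comm] using this
    have h2 : HasDerivAt (fun y : ℝ => 1 - m * Real.sin y ^ 2)
        (-(m * (2 * Real.sin θ * Real.cos θ))) θ := (h1.const_mul m).const_sub 1
    have h3 := h2.fun_inv (ne_of_gt (hD_pos θ))
    refine h3.congr_deriv ?_
    ring
  -- injectivity
  have hinj : Set.InjOn f (Set.Ioo 0 (π/2)) := by
    apply StrictMonoOn.injOn
    intro a ha b hb hab
    have hsa : Real.sin a < Real.sin b := by
      apply Real.strictMonoOn_sin ⟨by linarith [ha.1], by linarith [ha.2]⟩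
        ⟨by linarith [hb.1], by linarith [hb.2]⟩ hab
    have hsa0 : 0 < Real.sin a :=
      Real.sin_pos_of_pos_of_lt_pi ha.1 (by linarith [ha.2])
    have hsq : Real.sin a ^ 2 < Real.sin b ^ 2 := by nlinarith
    have hlt : 1 - m * Real.sin b ^ 2 < 1 - m * Real.sin a ^ 2 := by nlinarith
    exact inv_strictAnti₀ (hD_pos b) hlt
  -- image
  have himg : f '' Set.Ioo 0 (π/2) = Set.Ioo 1 (1/t) := by
    ext y
    constructor
    · rintro ⟨θ, hθ, rfl⟩
      have hs0 : 0 < Real.sin θ :=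
        Real.sin_pos_of_pos_of_lt_pi hθ.1 (by linarith [hθ.2])
      have hs1 : Real.sin θ < 1 := by
        have := Real.strictMonoOn_sin
          (Set.mem_Icc.mpr ⟨by linarith [hθ.1], by linarith [hθ.2]⟩)
          (Set.mem_Icc.mpr ⟨by linarith, le_refl _⟩) hθ.2
        rwa [Real.sin_pi_div_two] at this
      have hs2pos : 0 < Real.sin θ ^ 2 := pow_pos hs0 2
      have hs2lt : Real.sin θ ^ 2 < 1 := by nlinarith
      have hDlt1 : 1 - m * Real.sin θ ^ 2 < 1 := by nlinarith [mul_pos hm0 hs2pos]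
      have hmul : m * Real.sin θ ^ 2 < m * 1 := mul_lt_mul_of_pos_left hs2lt hm0
      have hDgt : t < 1 - m * Real.sin θ ^ 2 := by
        rw [mul_one] at hmul
        have := hm_def
        linarith
      constructor
      · exact (one_lt_inv₀ (hD_pos θ)).mpr hDlt1
      · rw [one_div]
        exact inv_strictAnti₀ ht0 hDgt
    · intro hy
      have hy1 : 1 < y := hy.1
      have hy0 : 0 < y := by linarith
      have hiy1 : 1/y < 1 := by rw [div_lt_one hy0]; exact hy1
      have hiyt : t < 1/y := by
        rw [lt_div_iff₀ hy0]
        have := hy.2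
        calc t * y < t * (1/t) := by apply mul_lt_mul_of_pos_left this ht0
          _ = 1 := by field_simp
      set w : ℝ := (1 - 1/y) / m with hw_def
      have hw0 : 0 < w := by apply div_pos (by linarith) hm0
      have hw1 : w < 1 := by
        rw [div_lt_one hm0]
        simp only [hm_def]
        linarith
      set z : ℝ := Real.sqrt w with hz_def
      have hz0 : 0 < z := Real.sqrt_pos.mpr hw0
      have hz1 : z < 1 := by
        rw [hz_def, Real.sqrt_lt' one_pos]
        simpa using hw1
      refine ⟨Real.arcsin z, ⟨Real.arcsin_pos.mpr hz0, Real.arcsin_lt_pi_div_two.mpr hz1⟩, ?_⟩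
      have hsz : Real.sin (Real.arcsin z) = z := Real.sin_arcsin (by linarith) hz1.le
      have hsz2 : Real.sin (Real.arcsin z) ^ 2 = w := by
        rw [hsz, hz_def, Real.sq_sqrt hw0.le]
      show (1 - m * Real.sin (Real.arcsin z) ^ 2)⁻¹ = y
      rw [hsz2, hw_def]
      have hmw : m * ((1 - 1/y) / m) = 1 - 1/y := by field_simp
      rw [hmw]
      have h1y : (1:ℝ) - (1 - 1/y) = 1/y := by ring
      rw [h1y, one_div, inv_inv]
  -- the interval integral as a set integral over Ioo
  rw [intervalIntegral.integral_of_le h1t.le, MeasureTheory.integral_Ioc_eq_integral_Ioo,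
    ← himg,
    MeasureTheory.integral_image_eq_integral_abs_deriv_smul measurableSet_Ioo
      (fun θ _ => (hf_deriv θ).hasDerivWithinAt) hinj]
  -- pointwise identity of the integrand with the series
  have hpt : ∀ θ ∈ Set.Ioo (0:ℝ) (π/2),
      |2 * m * Real.sin θ * Real.cos θ / (1 - m * Real.sin θ ^ 2) ^ 2| •
        (1 / Real.sqrt (f θ * (f θ - 1) * (1 - t * f θ)))
      = ∑' n : ℕ, 2 * cc n * (m ^ n * Real.sin θ ^ (2*n)) := by
    intro θ hθ
    have hs0 : 0 < Real.sin θ :=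
      Real.sin_pos_of_pos_of_lt_pi hθ.1 (by linarith [hθ.2])
    have hc0 : 0 < Real.cos θ :=
      Real.cos_pos_of_mem_Ioo ⟨by linarith [hθ.1], hθ.2⟩
    have hD := hD_pos θ
    have hDne : (1 - m * Real.sin θ ^ 2) ≠ 0 := ne_of_gt hD
    have hcsq : Real.cos θ ^ 2 = 1 - Real.sin θ ^ 2 := Real.cos_sq' θ
    -- the value of the original integrand at f θ
    have hts : t = 1 - m := by rw [hm_def]; ring
    have hA : f θ * (f θ - 1) * (1 - t * f θ)
        = (m * Real.sin θ * Real.cos θ / (1 - m * Real.sin θ ^ 2)) ^ 2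
          * (1 - m * Real.sin θ ^ 2)⁻¹ := by
      have hsqc : (m * Real.sin θ * Real.cos θ / (1 - m * Real.sin θ ^ 2)) ^ 2
          = m^2 * Real.sin θ^2 * (1 - Real.sin θ^2) / (1 - m * Real.sin θ ^ 2)^2 := by
        rw [div_pow, mul_pow, mul_pow, hcsq]
      rw [hsqc, hf_def]
      simp only []
      rw [hts]
      field_simp
      ring
    have hmsc : 0 < m * Real.sin θ * Real.cos θ := by positivity
    have hsqrtD : 0 < Real.sqrt (1 - m * Real.sin θ ^ 2) := Real.sqrt_pos.mpr hD
    have hsqrtA : Real.sqrt (f θ * (f θ - 1) * (1 - t * f θ))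
        = (m * Real.sin θ * Real.cos θ / (1 - m * Real.sin θ ^ 2))
          * (Real.sqrt (1 - m * Real.sin θ ^ 2))⁻¹ := by
      rw [hA, Real.sqrt_mul (sq_nonneg _), Real.sqrt_sq (by positivity), Real.sqrt_inv]
    have habs : |2 * m * Real.sin θ * Real.cos θ / (1 - m * Real.sin θ ^ 2) ^ 2|
        = 2 * m * Real.sin θ * Real.cos θ / (1 - m * Real.sin θ ^ 2) ^ 2 := by
      apply abs_of_pos; positivity
    have hz0 : (0:ℝ) ≤ m * Real.sin θ ^ 2 := by positivity
    have hz1 : m * Real.sin θ ^ 2 < 1 := by linarith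
    have hsum := (hasSum_gg hz0 hz1).mul_left 2
    have htsum := hsum.tsum_eq
    have hzpow : ∀ n : ℕ, (m * Real.sin θ ^ 2) ^ n = m ^ n * Real.sin θ ^ (2*n) := by
      intro n
      rw [mul_pow, ← pow_mul]
    rw [smul_eq_mul, habs, hsqrtA]
    have hgoal : 2 * m * Real.sin θ * Real.cos θ / (1 - m * Real.sin θ ^ 2) ^ 2 *
        (1 / (m * Real.sin θ * Real.cos θ / (1 - m * Real.sin θ ^ 2) *
          (Real.sqrt (1 - m * Real.sin θ ^ 2))⁻¹))
        = 2 * (1 / Real.sqrt (1 - (m * Real.sin θ ^ 2))) := by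
      have hss : Real.sqrt (1 - m * Real.sin θ ^ 2) * Real.sqrt (1 - m * Real.sin θ ^ 2)
          = 1 - m * Real.sin θ ^ 2 := Real.mul_self_sqrt hD.le
      field_simp
      linear_combination hss
    rw [hgoal, ← htsum]
    apply tsum_congr
    intro n
    rw [hzpow n]
    ring
  rw [MeasureTheory.setIntegral_congr_fun measurableSet_Ioo hpt]
  -- term-by-term integration
  have hmeas : ∀ n : ℕ, MeasureTheory.AEStronglyMeasurable
      (fun θ : ℝ => 2 * cc n * (m ^ n * Real.sin θ ^ (2*n)))
      (MeasureTheory.volume.restrict (Set.Ioo 0 (π/2))) := by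
    intro n
    exact Continuous.aestronglyMeasurable
      (continuous_const.mul (continuous_const.mul (Real.continuous_sin.pow (2*n))))
  have hlint : ∑' n : ℕ, ∫⁻ θ in Set.Ioo (0:ℝ) (π/2),
      ‖2 * cc n * (m ^ n * Real.sin θ ^ (2*n))‖₊ ≠ ⊤ := by
    have hle : ∀ n : ℕ, (∫⁻ θ in Set.Ioo (0:ℝ) (π/2),
        ‖2 * cc n * (m ^ n * Real.sin θ ^ (2*n))‖₊)
        ≤ ENNReal.ofReal (π * m ^ n) := by
      intro n
      have hb : ∀ θ : ℝ, (‖2 * cc n * (m ^ n * Real.sin θ ^ (2*n))‖₊ : ENNReal)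
          ≤ ENNReal.ofReal (2 * m ^ n) := by
        intro θ
        rw [← enorm_eq_nnnorm, ← ofReal_norm]
        apply ENNReal.ofReal_le_ofReal
        have hs2n0 : 0 ≤ Real.sin θ ^ (2*n) := by
          rw [pow_mul]; positivity
        have hs2n1 : Real.sin θ ^ (2*n) ≤ 1 := by
          rw [pow_mul]; exact pow_le_one₀ (sq_nonneg _) (Real.sin_sq_le_one θ)
        have hnn : (0:ℝ) ≤ 2 * cc n * (m ^ n * Real.sin θ ^ (2*n)) :=
          mul_nonneg (by nlinarith [cc_pos n]) (mul_nonneg (pow_nonneg hm0.le n) hs2n0)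
        rw [Real.norm_eq_abs, abs_of_nonneg hnn]
        have hcs : cc n * Real.sin θ ^ (2*n) ≤ 1 :=
          mul_le_one₀ (cc_le_one n) hs2n0 hs2n1
        nlinarith [pow_nonneg hm0.le n, hcs, cc_pos n]
      refine le_trans (MeasureTheory.lintegral_mono (fun θ => hb θ)) ?_
      rw [MeasureTheory.setLIntegral_const, Real.volume_Ioo,
        ← ENNReal.ofReal_mul (by positivity)]
      apply ENNReal.ofReal_le_ofReal
      have : 2 * m ^ n * (π/2 - 0) = π * m ^ n := by ring
      rw [this]
    have hsumm : Summable (fun n : ℕ => π * m ^ n) :=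
      (summable_geometric_of_lt_one hm0.le hm1).mul_left π
    apply ne_top_of_le_ne_top _ (ENNReal.tsum_le_tsum hle)
    rw [← ENNReal.ofReal_tsum_of_nonneg (fun n => by positivity) hsumm]
    exact ENNReal.ofReal_ne_top
  rw [MeasureTheory.integral_tsum hmeas hlint]
  -- evaluate each term
  have hterm : ∀ n : ℕ, ∫ θ in Set.Ioo (0:ℝ) (π/2),
      2 * cc n * (m ^ n * Real.sin θ ^ (2*n))
      = π * (cc n * cc n * m ^ n) := by
    intro n
    rw [← MeasureTheory.integral_Ioc_eq_integral_Ioo,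
      ← intervalIntegral.integral_of_le (by positivity : (0:ℝ) ≤ π/2)]
    have : ∀ θ : ℝ, 2 * cc n * (m ^ n * Real.sin θ ^ (2*n))
        = (2 * cc n * m ^ n) * Real.sin θ ^ (2*n) := by intro θ; ring
    simp_rw [this]
    rw [intervalIntegral.integral_const_mul, integral_sin_pow_half]
    ring
  rw [tsum_congr hterm]
  -- identify with the hypergeometric series
  rw [hyp2F1, ← tsum_mul_left]
  apply tsum_congr
  intro n
  rw [pochR_one_eq]
  have hfac : (n.factorial : ℝ) ≠ 0 := Nat.cast_ne_zero.mpr n.factorial_ne_zero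
  rw [cc]
  field_simp
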